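/- Let k be a commutative ring, V a k-module, and n ∈ ℕ. Let A = Σ_{i=2}^{n+1} τ_{1,i} ∈ End_k(V^{⊗(n+1)}), where τ_{1,i} is the endomorphism of V^{⊗(n+1)} swapping the 1st and i-th tensor factors and fixing the others. Then A, viewed as a k-linear map V⊗M → V⊗M with M = V^{⊗n}, satisfies the curried gl identity. (This is the action of the curried general linear algebra on the n-th tensor power of the standard representation.) -/

import Mathlib

open TensorProduct

/-- The braiding of the first two factors of `V ⊗ V ⊗ M` (tensored with `id` on `M`). -/
noncomputable def glTau (k V M : Type) [CommRing k] [AddCommGroup V] [Module k V]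
    [AddCommGroup M] [Module k M] :
    V ⊗[k] (V ⊗[k] M) →ₗ[k] V ⊗[k] (V ⊗[k] M) :=
  (TensorProduct.assoc k V V M).toLinearMap ∘ₗ
    LinearMap.rTensor M (TensorProduct.comm k V V).toLinearMap ∘ₗ
    (TensorProduct.assoc k V V M).symm.toLinearMap

/-- The curried gl identity for a map `a : V ⊗ M → V ⊗ M`:
with `τ` the braiding of the two `V`-factors of `V ⊗ V ⊗ M`, `a₂ = id_V ⊗ a` and
`a₁ = τ ∘ a₂ ∘ τ`, it reads `a₁ ∘ a₂ - a₂ ∘ a₁ = τ ∘ (a₁ - a₂)`. -/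
def CurriedGlIdentity (k V M : Type) [CommRing k] [AddCommGroup V] [Module k V]
    [AddCommGroup M] [Module k M] (a : V ⊗[k] M →ₗ[k] V ⊗[k] M) : Prop :=
  let τ : V ⊗[k] (V ⊗[k] M) →ₗ[k] V ⊗[k] (V ⊗[k] M) := glTau k V M
  let a₂ : V ⊗[k] (V ⊗[k] M) →ₗ[k] V ⊗[k] (V ⊗[k] M) := LinearMap.lTensor V a
  let a₁ : V ⊗[k] (V ⊗[k] M) →ₗ[k] V ⊗[k] (V ⊗[k] M) := τ ∘ₗ a₂ ∘ₗ τ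
  a₁ ∘ₗ a₂ - a₂ ∘ₗ a₁ = τ ∘ₗ (a₁ - a₂)

open PiTensorProduct

/-- The canonical equivalence `V^{⊗(n+1)} ≅ V ⊗ V^{⊗n}` splitting off the first
tensor factor. -/
noncomputable def splitFirst (k V : Type) [CommRing k] [AddCommGroup V] [Module k V] (n : ℕ) :
    (⨂[k] (_ : Fin (n + 1)), V) ≃ₗ[k] V ⊗[k] (⨂[k] (_ : Fin n), V) :=
  (PiTensorProduct.reindex k (fun _ => V)
      ((finCongr (by omega : n + 1 = 1 + n)).trans finSumFinEquiv.symm)).trans <|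
    ((PiTensorProduct.tmulEquiv k V).symm.trans
      (TensorProduct.congr (PiTensorProduct.subsingletonEquiv (0 : Fin 1))
        (LinearEquiv.refl k _)))


section Aux
variable {k V : Type} [CommRing k] [AddCommGroup V] [Module k V] {n : ℕ}

lemma glTau_tmul (M : Type) [AddCommGroup M] [Module k M] (u w : V) (m : M) :
    glTau k V M (u ⊗ₜ[k] (w ⊗ₜ[k] m)) = w ⊗ₜ[k] (u ⊗ₜ[k] m) := by
  simp [glTau]

lemma splitFirst_tprod (x : Fin (n+1) → V) :
    splitFirst k V n (tprod k x) = x 0 ⊗ₜ[k] tprod k (fun i => x i.succ) := by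
  simp [splitFirst]
  congr 1

lemma splitFirst_symm_tmul (v : V) (m : Fin n → V) :
    (splitFirst k V n).symm (v ⊗ₜ[k] tprod k m) = PiTensorProduct.tprod k (Fin.cons v m) := by
  rw [LinearEquiv.symm_apply_eq, splitFirst_tprod]
  simp

lemma cons_swap (v : V) (m : Fin n → V) (i j : Fin n) :
    (Fin.cons v m : Fin (n+1) → V) (Equiv.swap (0 : Fin (n+1)) i.succ j.succ)
      = Function.update m i v j := by
  rcases eq_or_ne j i with rfl | h
  · simp [Equiv.swap_apply_right]
  · rw [Equiv.swap_apply_of_ne_of_ne (Fin.succ_ne_zero j)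
      (by simpa using Fin.succ_injective n |>.ne h)]
    simp [Function.update_of_ne h]

lemma a_tmul (v : V) (m : Fin n → V) :
    (splitFirst k V n)
      ((∑ i : Fin n,
          (PiTensorProduct.reindex k (fun (_ : Fin (n + 1)) => V)
            (Equiv.swap (0 : Fin (n + 1)) i.succ)).toLinearMap)
        ((splitFirst k V n).symm (v ⊗ₜ[k] tprod k m)))
      = ∑ i : Fin n, m i ⊗ₜ[k] tprod k (Function.update m i v) := by
  simp only [LinearEquiv.coe_coe, splitFirst_symm_tmul,
    LinearMap.coe_sum, Finset.sum_apply, map_sum, reindex_tprod, splitFirst_tprod]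
  refine Finset.sum_congr rfl fun i _ => ?_
  rw [Equiv.symm_swap]
  have h1 : (Fin.cons v m : Fin (n+1) → V) (Equiv.swap (0 : Fin (n+1)) i.succ 0) = m i := by
    simp [Equiv.swap_apply_left]
  have h2 : (fun j : Fin n => (Fin.cons v m : Fin (n+1) → V)
      (Equiv.swap (0 : Fin (n+1)) i.succ j.succ)) = Function.update m i v :=
    funext fun j => cons_swap v m i j
  rw [h1, h2]


noncomputable def glA (k V : Type) [CommRing k] [AddCommGroup V] [Module k V] (n : ℕ) :
    (V ⊗[k] (⨂[k] (_ : Fin n), V)) →ₗ[k] (V ⊗[k] (⨂[k] (_ : Fin n), V)) :=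
  (splitFirst k V n).toLinearMap ∘ₗ
    (∑ i : Fin n,
      (PiTensorProduct.reindex k (fun (_ : Fin (n + 1)) => V)
        (Equiv.swap (0 : Fin (n + 1)) i.succ)).toLinearMap) ∘ₗ
    (splitFirst k V n).symm.toLinearMap

lemma glA_tmul (v : V) (m : Fin n → V) :
    glA k V n (v ⊗ₜ[k] tprod k m)
      = ∑ i : Fin n, m i ⊗ₜ[k] tprod k (Function.update m i v) := by
  rw [glA]
  simp only [LinearMap.comp_apply, LinearEquiv.coe_coe]
  exact a_tmul v m

lemma a2_tmul (v w : V) (m : Fin n → V) :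
    LinearMap.lTensor V (glA k V n) (v ⊗ₜ[k] (w ⊗ₜ[k] tprod k m))
      = ∑ i : Fin n, v ⊗ₜ[k] (m i ⊗ₜ[k] tprod k (Function.update m i w)) := by
  rw [LinearMap.lTensor_tmul, glA_tmul, tmul_sum]

lemma a1_tmul (v w : V) (m : Fin n → V) :
    glTau k V (⨂[k] (_ : Fin n), V)
      (LinearMap.lTensor V (glA k V n)
        (glTau k V (⨂[k] (_ : Fin n), V) (v ⊗ₜ[k] (w ⊗ₜ[k] tprod k m))))
      = ∑ i : Fin n, m i ⊗ₜ[k] (w ⊗ₜ[k] tprod k (Function.update m i v)) := by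
  rw [glTau_tmul, a2_tmul, map_sum]
  exact Finset.sum_congr rfl fun i _ => glTau_tmul _ _ _ _

lemma offdiag_cancel {A : Type} [AddCommGroup A] {n : ℕ} (F G : Fin n → Fin n → A)
    (h : ∀ i j, i ≠ j → F i j = G j i) :
    (∑ i, ∑ j, F i j) - (∑ i, ∑ j, G i j) = (∑ i, F i i) - (∑ i, G i i) := by
  have hsplit : ∀ (X : Fin n → Fin n → A),
      (∑ i, ∑ j, X i j) = (∑ i, X i i) + ∑ i, ∑ j ∈ Finset.univ.erase i, X i j := by
    intro X
    rw [← Finset.sum_add_distrib]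
    exact Finset.sum_congr rfl fun i _ =>
      (Finset.add_sum_erase Finset.univ (X i) (Finset.mem_univ i)).symm
  have hoff : (∑ i, ∑ j ∈ Finset.univ.erase i, F i j)
      = ∑ i, ∑ j ∈ Finset.univ.erase i, G i j := by
    have : (∑ i, ∑ j ∈ Finset.univ.erase i, F i j)
        = ∑ i, ∑ j ∈ Finset.univ.erase i, G j i :=
      Finset.sum_congr rfl fun i _ => Finset.sum_congr rfl fun j hj =>
        h i j (Ne.symm (Finset.ne_of_mem_erase hj))
    rw [this]
    exact Finset.sum_comm' (by
      intro x y
      simp only [Finset.mem_univ, true_and, Finset.mem_erase, and_true]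
      exact ne_comm)
  rw [hsplit F, hsplit G, hoff]
  abel

end Aux

/-- Let `A = ∑_{i=2}^{n+1} τ_{1,i}` be the endomorphism of `V^{⊗(n+1)}`
given by the sum of the transpositions of the first factor with each of the remaining `n`
factors.  Then `A`, viewed as a map `V ⊗ M → V ⊗ M` with `M = V^{⊗ n}` via the canonical
equivalence, satisfies the curried gl identity: it is the action of the curried general
linear algebra on the `n`-th tensor power of the standard representation. -/
theorem statement4 (k V : Type) [CommRing k] [AddCommGroup V] [Module k V] (n : ℕ) :
    CurriedGlIdentity k V (⨂[k] (_ : Fin n), V)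
      ((splitFirst k V n).toLinearMap ∘ₗ
        (∑ i : Fin n,
          (PiTensorProduct.reindex k (fun (_ : Fin (n + 1)) => V)
            (Equiv.swap (0 : Fin (n + 1)) i.succ)).toLinearMap) ∘ₗ
        (splitFirst k V n).symm.toLinearMap) := by
  have key : ∀ (v w : V) (m : Fin n → V),
      glTau k V (⨂[k] (_ : Fin n), V)
          (LinearMap.lTensor V (glA k V n)
            (glTau k V (⨂[k] (_ : Fin n), V)
              (LinearMap.lTensor V (glA k V n) (v ⊗ₜ[k] (w ⊗ₜ[k] tprod k m)))))
        - LinearMap.lTensor V (glA k V n)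
            (glTau k V (⨂[k] (_ : Fin n), V)
              (LinearMap.lTensor V (glA k V n)
                (glTau k V (⨂[k] (_ : Fin n), V) (v ⊗ₜ[k] (w ⊗ₜ[k] tprod k m)))))
      = glTau k V (⨂[k] (_ : Fin n), V)
          (glTau k V (⨂[k] (_ : Fin n), V)
            (LinearMap.lTensor V (glA k V n)
              (glTau k V (⨂[k] (_ : Fin n), V) (v ⊗ₜ[k] (w ⊗ₜ[k] tprod k m))))
          - LinearMap.lTensor V (glA k V n) (v ⊗ₜ[k] (w ⊗ₜ[k] tprod k m))) := by
    intro v w m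
    simp only [glTau_tmul, a2_tmul, map_sum, map_sub, LinearMap.lTensor_tmul, glA_tmul,
      tmul_sum]
    rw [offdiag_cancel
      (fun i j => Function.update m i w j ⊗ₜ[k]
        (m i ⊗ₜ[k] tprod k (Function.update (Function.update m i w) j v)))
      (fun i j => m i ⊗ₜ[k] (Function.update m i v j ⊗ₜ[k]
        tprod k (Function.update (Function.update m i v) j w)))
      (by
        intro i j hij
        simp only [Function.update_of_ne (Ne.symm hij), Function.update_of_ne hij]
        rw [Function.update_comm hij])]
    congr 1
    · exact Finset.sum_congr rfl fun i _ => by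
        simp [Function.update_self, Function.update_idem]
    · exact Finset.sum_congr rfl fun i _ => by
        simp [Function.update_self, Function.update_idem]
  unfold CurriedGlIdentity
  refine TensorProduct.ext' fun v y => ?_
  induction y using TensorProduct.induction_on with
  | zero => simp
  | add y₁ y₂ h₁ h₂ =>
    rw [tmul_add, map_add, map_add, h₁, h₂]
  | tmul w p =>
    induction p using PiTensorProduct.induction_on with
    | smul_tprod r f =>
      have : v ⊗ₜ[k] (w ⊗ₜ[k] (r • tprod k f)) = r • (v ⊗ₜ[k] (w ⊗ₜ[k] tprod k f)) := by
        rw [tmul_smul, tmul_smul]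
      rw [this, map_smul, map_smul]
      exact congrArg (r • ·) (key v w f)
    | add p₁ p₂ h₁ h₂ =>
      rw [tmul_add, tmul_add, map_add, map_add, h₁, h₂]
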